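/- Let q be a self-join-free Boolean conjunctive query that is saturated and whose attack graph contains no strong cycle. Let S be an initial strong component of the attack graph of q with at least 2 atoms. Then for every atom F ∈ S there exists an atom H ∈ S with F →_M H; consequently, the M-graph of q contains a directed cycle all of whose atoms belong to S. -/

import Mathlib

/-- A set `Vs` of valuations satisfies the functional dependency `X → Y`. -/
def FDSat {V D : Type} (Vs : Set (V → D)) (X Y : Set V) : Prop :=
  ∀ θ ∈ Vs, ∀ μ ∈ Vs, (∀ x ∈ X, θ x = μ x) → ∀ y ∈ Y, θ y = μ y

/-- Logical implication of functional dependencies, with respect to finite sets of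
valuations into the domain `D`. -/
def FDImplies {V : Type} (D : Type) (Sg : Set (Set V × Set V)) (X Y : Set V) : Prop :=
  ∀ Vs : Set (V → D), Vs.Finite → (∀ σ ∈ Sg, FDSat Vs σ.1 σ.2) → FDSat Vs X Y

/-- `FD(s) = {key(F) → vars(F) : F ∈ s}`, for a set `s` of atoms. -/
def FDsetA {A V : Type} (keyA varsA : A → Set V) (s : Set A) : Set (Set V × Set V) :=
  (fun F => (keyA F, varsA F)) '' s

/-- The atoms of `q` of mode `c` (consistent relations). -/
def catomsA {A : Type} (mode : A → Bool) (q : Set A) : Set A :=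
  {F ∈ q | mode F = true}

/-- The closure `key⁺(F,q)`: all variables `x` with
`FD(q \ {F}) ∪ FD(c-atoms(q)) ⊨ key(F) → x`. -/
def keyCl {A V : Type} (D : Type) (keyA varsA : A → Set V) (mode : A → Bool)
    (q : Set A) (F : A) : Set V :=
  {x | FDImplies D (FDsetA keyA varsA ((q \ {F}) ∪ catomsA mode q)) (keyA F) {x}}

/-- One step of a witness for an attack by the atom whose closure is `X`:
the next atom `H` is in `q` and shares with the current atom `G` a variable
outside `X`. -/
def attackStep {A V : Type} (varsA : A → Set V) (q : Set A) (X : Set V)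
    (G H : A) : Prop :=
  H ∈ q ∧ ∃ x, x ∈ varsA G ∧ x ∈ varsA H ∧ x ∉ X

/-- `F` attacks `G` in the attack graph of `q`: `F ≠ G`, both in `q`, and there is
a witness sequence from `F` to `G` each step of which shares a variable outside
`key⁺(F,q)`. -/
def attacks {A V : Type} (D : Type) (keyA varsA : A → Set V) (mode : A → Bool)
    (q : Set A) (F G : A) : Prop :=
  F ∈ q ∧ G ∈ q ∧ F ≠ G ∧
    Relation.ReflTransGen (attackStep varsA q (keyCl D keyA varsA mode q F)) F G

/-- Edge `F →_M G` of the M-graph: `F ≠ G`, both in `q`, and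
`FD(c-atoms(q)) ⊨ vars(F) → key(G)`. -/
def MedgeA {A V : Type} (D : Type) (keyA varsA : A → Set V) (mode : A → Bool)
    (q : Set A) (F G : A) : Prop :=
  F ∈ q ∧ G ∈ q ∧ F ≠ G ∧
    FDImplies D (FDsetA keyA varsA (catomsA mode q)) (varsA F) (keyA G)

/-- `F` attacks the variable `x`: there is a witness sequence from `F` to an atom
containing `x`, where `x` and every step variable lie outside `key⁺(F,q)`. -/
def attacksVar {A V : Type} (D : Type) (keyA varsA : A → Set V) (mode : A → Bool)
    (q : Set A) (F : A) (x : V) : Prop :=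
  F ∈ q ∧ x ∉ keyCl D keyA varsA mode q F ∧
    ∃ G, Relation.ReflTransGen
        (attackStep varsA q (keyCl D keyA varsA mode q F)) F G ∧ x ∈ varsA G

/-- `L` is a sequential proof for `FD(q) ⊨ Z → w`. -/
def IsSeqProof {A V : Type} (keyA varsA : A → Set V) (q : Set A)
    (Z : Set V) (w : V) (L : List A) : Prop :=
  (∀ F ∈ L, F ∈ q) ∧
  (∀ i (h : i < L.length),
      keyA (L.get ⟨i, h⟩) ⊆ Z ∪ {v | ∃ F ∈ L.take i, v ∈ varsA F}) ∧
  ∃ F ∈ L, w ∈ varsA F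

/-- The functional dependency `Z → w` is internal to `q`: there is a sequential
proof for `FD(q) ⊨ Z → w` no atom of which attacks a variable of `Z ∪ {w}`, and
`Z ⊆ vars(F)` for some atom `F` of `q`. -/
def Internal {A V : Type} (D : Type) (keyA varsA : A → Set V) (mode : A → Bool)
    (q : Set A) (Z : Set V) (w : V) : Prop :=
  (∃ L, IsSeqProof keyA varsA q Z w L ∧
      ∀ F ∈ L, ∀ u ∈ Z ∪ {w}, ¬ attacksVar D keyA varsA mode q F u) ∧
  ∃ F ∈ q, Z ⊆ varsA F

/-- `q` is saturated: every functional dependency internal to `q` is implied by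
`FD(c-atoms(q))`. -/
def Saturated {A V : Type} (D : Type) (keyA varsA : A → Set V) (mode : A → Bool)
    (q : Set A) : Prop :=
  ∀ Z w, Internal D keyA varsA mode q Z w →
    FDImplies D (FDsetA keyA varsA (catomsA mode q)) Z {w}

/-- The attack graph of `q` contains no strong cycle. -/
def NoStrongCycle {A V : Type} (D : Type) (keyA varsA : A → Set V) (mode : A → Bool)
    (q : Set A) : Prop :=
  ¬ ∃ (n : ℕ) (f : ℕ → A), 0 < n ∧ f n = f 0 ∧
      (∀ i < n, attacks D keyA varsA mode q (f i) (f (i + 1))) ∧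
      ∃ i < n, ¬ FDImplies D (FDsetA keyA varsA q) (keyA (f i)) (keyA (f (i + 1)))

/-- `S` is an initial strong component of the attack graph of `q`:
it is the mutual-reachability class of some atom of `q` and no attack enters it
from outside. -/
def IsInitialSCC {A V : Type} (D : Type) (keyA varsA : A → Set V) (mode : A → Bool)
    (q : Set A) (S : Set A) : Prop :=
  (∃ F₀, F₀ ∈ q ∧ S = {G | G ∈ q ∧
      Relation.ReflTransGen (attacks D keyA varsA mode q) F₀ G ∧
      Relation.ReflTransGen (attacks D keyA varsA mode q) G F₀}) ∧
  ∀ F G, attacks D keyA varsA mode q F G → G ∈ S → F ∈ S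

section Aux
variable {A V : Type}

inductive FDCl (Sg : Set (Set V × Set V)) (Z : Set V) : V → Prop
  | base {x : V} : x ∈ Z → FDCl Sg Z x
  | step {σ : Set V × Set V} {w : V} : σ ∈ Sg → (∀ u ∈ σ.1, FDCl Sg Z u) → w ∈ σ.2 →
      FDCl Sg Z w

lemma FDCl.sound {D : Type} {Sg : Set (Set V × Set V)} {Z : Set V}
    (Vs : Set (V → D)) (hsat : ∀ σ ∈ Sg, FDSat Vs σ.1 σ.2)
    {θ μ : V → D} (hθ : θ ∈ Vs) (hμ : μ ∈ Vs) (hag : ∀ x ∈ Z, θ x = μ x)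
    {w : V} (h : FDCl Sg Z w) : θ w = μ w := by
  induction h with
  | base hx => exact hag _ hx
  | step hσ hk hw ih => exact hsat _ hσ θ hθ μ hμ ih _ hw

lemma fdImplies_of_cl {D : Type} {Sg : Set (Set V × Set V)} {Z Y : Set V}
    (h : ∀ y ∈ Y, FDCl Sg Z y) : FDImplies D Sg Z Y :=
  fun Vs _ hsat θ hθ μ hμ hag y hy => FDCl.sound Vs hsat hθ hμ hag (h y hy)

lemma cl_of_fdImplies {D : Type} [Infinite D] {Sg : Set (Set V × Set V)} {Z Y : Set V}
    (h : FDImplies D Sg Z Y) : ∀ y ∈ Y, FDCl Sg Z y := by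
  classical
  obtain ⟨a, b, hab⟩ := exists_pair_ne D
  set μ : V → D := fun x => if FDCl Sg Z x then a else b with hμdef
  have hcl : ∀ x, μ x = a ↔ FDCl Sg Z x := by
    intro x
    by_cases hx : FDCl Sg Z x <;> simp [hμdef, hx, hab.symm]
  have hsat2 : ∀ σ ∈ Sg, FDSat ({fun _ => a, μ} : Set (V → D)) σ.1 σ.2 := by
    intro σ hσ θ' hθ' μ' hμ' hag y hy
    rcases hθ' with rfl | rfl <;> rcases hμ' with rfl | rfl
    · rfl
    · have hk : ∀ u ∈ σ.1, FDCl Sg Z u := fun u hu => (hcl u).mp (hag u hu).symm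
      exact ((hcl y).mpr (FDCl.step hσ hk hy)).symm
    · have hk : ∀ u ∈ σ.1, FDCl Sg Z u := fun u hu => (hcl u).mp (hag u hu)
      exact (hcl y).mpr (FDCl.step hσ hk hy)
    · rfl
  intro y hy
  have hfin : ({fun _ => a, μ} : Set (V → D)).Finite :=
    (Set.finite_singleton μ).insert _
  have := h _ hfin hsat2 (fun _ => a) (Or.inl rfl) μ (Or.inr rfl)
    (fun x hx => ((hcl x).mpr (FDCl.base hx)).symm) y hy
  exact (hcl y).mp this.symm

def varsUn (varsA : A → Set V) (L : List A) : Set V := {v | ∃ F ∈ L, v ∈ varsA F}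

lemma exists_seq_list (keyA varsA : A → Set V) (s : Set A) (hs : s.Finite) (Z : Set V) :
    ∃ L : List A, (∀ E ∈ L, E ∈ s) ∧
      (∀ i (h : i < L.length), keyA (L.get ⟨i, h⟩) ⊆ Z ∪ varsUn varsA (L.take i)) ∧
      ∀ w, FDCl (FDsetA keyA varsA s) Z w → w ∈ Z ∪ varsUn varsA L := by
  classical
  set Valid : List A → Prop := fun L => L.Nodup ∧ (∀ E ∈ L, E ∈ s) ∧
      ∀ i (h : i < L.length), keyA (L.get ⟨i, h⟩) ⊆ Z ∪ varsUn varsA (L.take i) with hValid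
  have hbound : ∀ L, Valid L → L.length ≤ hs.toFinset.card := by
    intro L hL
    have h1 : L.toFinset ⊆ hs.toFinset := by
      intro x hx
      rw [List.mem_toFinset] at hx
      rw [Set.Finite.mem_toFinset]
      exact hL.2.1 x hx
    calc L.length = L.toFinset.card := (List.toFinset_card_of_nodup hL.1).symm
      _ ≤ _ := Finset.card_le_card h1
  set P : ℕ → Prop := fun n => ∃ L, Valid L ∧ L.length = n with hP
  have hP0 : P 0 := ⟨[], ⟨List.nodup_nil, by simp, fun i h => by simp at h⟩, rfl⟩
  set N := hs.toFinset.card with hN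
  obtain ⟨L, hLv, hLn⟩ : P (Nat.findGreatest P N) :=
    Nat.findGreatest_spec (Nat.zero_le N) hP0
  have hmax : ∀ L', Valid L' → L'.length ≤ Nat.findGreatest P N :=
    fun L' h => Nat.le_findGreatest (hbound L' h) ⟨L', h, rfl⟩
  refine ⟨L, hLv.2.1, hLv.2.2, ?_⟩
  intro w hw
  induction hw with
  | base hx => exact Or.inl hx
  | step hσ hk hwσ ih =>
    obtain ⟨E, hEs, hEeq⟩ := hσ
    subst hEeq
    by_cases hEL : E ∈ L
    · exact Or.inr ⟨E, hEL, hwσ⟩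
    · exfalso
      have hkeyE : keyA E ⊆ Z ∪ varsUn varsA L := fun u hu => ih u hu
      have hvalid2 : Valid (L ++ [E]) := by
        refine ⟨?_, ?_, ?_⟩
        · simp [List.nodup_append, hLv.1, hEL]; exact fun a ha h => hEL (h ▸ ha)
        · intro E' hE'
          rcases List.mem_append.mp hE' with h | h
          · exact hLv.2.1 E' h
          · rw [List.mem_singleton] at h; exact h ▸ hEs
        · intro i h
          have hlen : i < L.length + 1 := by simpa using h
          rcases Nat.lt_or_ge i L.length with hi | hi
          · have hget : (L ++ [E]).get ⟨i, h⟩ = L.get ⟨i, hi⟩ := by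
              simp [List.getElem_append_left, hi]
            have htake : (L ++ [E]).take i = L.take i :=
              List.take_append_of_le_length (Nat.le_of_lt hi)
            rw [hget, htake]
            exact hLv.2.2 i hi
          · have hieq : i = L.length := by omega
            subst hieq
            have hget : (L ++ [E]).get ⟨L.length, h⟩ = E := by simp
            have htake : (L ++ [E]).take L.length = L := by simp
            rw [hget, htake]
            exact hkeyE
      have := hmax _ hvalid2
      rw [List.length_append, List.length_singleton, hLn] at this
      omega

lemma attacksVar_attacks {D : Type} {keyA varsA : A → Set V} {mode : A → Bool} {q : Set A}
    {E : A} {u : V} (h : attacksVar D keyA varsA mode q E u) {G : A} (hGq : G ∈ q)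
    (huG : u ∈ varsA G) (hne : E ≠ G) : attacks D keyA varsA mode q E G := by
  obtain ⟨hEq, hu, G', hchain, huG'⟩ := h
  exact ⟨hEq, hGq, hne, hchain.tail ⟨hGq, u, huG', huG, hu⟩⟩

lemma rtg_to_fun {r : A → A → Prop} {a b : A} (h : Relation.ReflTransGen r a b) :
    ∃ (n : ℕ) (f : ℕ → A), f 0 = a ∧ f n = b ∧ ∀ i < n, r (f i) (f (i + 1)) := by
  induction h with
  | refl => exact ⟨0, fun _ => a, rfl, rfl, fun i hi => absurd hi (by omega)⟩
  | @tail b c hab hbc ih =>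
    obtain ⟨n, f, h0, hn, hstep⟩ := ih
    classical
    refine ⟨n + 1, fun i => if i ≤ n then f i else c, by simp [h0], by simp, ?_⟩
    intro i hi
    rcases Nat.lt_or_ge i n with hi' | hi'
    · have e1 : i ≤ n := by omega
      have e2 : i + 1 ≤ n := by omega
      simpa [e1, e2] using hstep i hi'
    · have hieq : i = n := by omega
      subst hieq
      simpa [hn] using hbc

lemma weak_edge {D : Type} {keyA varsA : A → Set V} {mode : A → Bool} {q : Set A}
    (hnsc : NoStrongCycle D keyA varsA mode q)
    {F c : A} (h1 : attacks D keyA varsA mode q F c)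
    (h2 : Relation.ReflTransGen (attacks D keyA varsA mode q) c F) :
    FDImplies D (FDsetA keyA varsA q) (keyA F) (keyA c) := by
  by_contra hw
  obtain ⟨n, f, h0, hn, hstep⟩ := rtg_to_fun h2
  classical
  apply hnsc
  refine ⟨n + 1, fun i => if i = 0 then F else f (i - 1), Nat.succ_pos n, ?_, ?_, 0,
    Nat.succ_pos n, ?_⟩
  · simp [Nat.succ_ne_zero, hn]
  · intro i hi
    rcases Nat.eq_zero_or_pos i with rfl | hi0
    · simpa [h0] using h1
    · have h1' : i ≠ 0 := by omega
      have h2' : i + 1 ≠ 0 := by omega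
      have h3' : i - 1 + 1 = i := by omega
      have := hstep (i - 1) (by omega)
      rw [h3'] at this
      simpa [h1', h2'] using this
  · simpa [h0] using hw

end Aux

/-- If `q` is saturated and its attack graph has no strong cycle, then for every
initial strong component `S` of the attack graph with at least two atoms:
every `F ∈ S` has an M-graph successor `H ∈ S`, and consequently the M-graph of
`q` contains a directed cycle all of whose atoms belong to `S`. -/
theorem saturated_initial_scc_mcycle {A V D : Type} [Infinite D]
    (keyA varsA : A → Set V) (mode : A → Bool)
    (q : Set A) (hq : q.Finite) (hkey : ∀ F, keyA F ⊆ varsA F)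
    (hsat : Saturated D keyA varsA mode q)
    (hnsc : NoStrongCycle D keyA varsA mode q)
    (S : Set A) (hS : IsInitialSCC D keyA varsA mode q S)
    (hnt : S.Nontrivial) :
    (∀ F ∈ S, ∃ H ∈ S, MedgeA D keyA varsA mode q F H) ∧
      ∃ (m : ℕ) (f : ℕ → A), 0 < m ∧ f m = f 0 ∧
        ∀ i < m, f i ∈ S ∧ MedgeA D keyA varsA mode q (f i) (f (i + 1)) := by
  classical
  obtain ⟨⟨F₀, hF₀q, hSeq⟩, hinit⟩ := hS
  have memS : ∀ {G}, G ∈ S ↔ (G ∈ q ∧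
      Relation.ReflTransGen (attacks D keyA varsA mode q) F₀ G ∧
      Relation.ReflTransGen (attacks D keyA varsA mode q) G F₀) := by
    intro G; rw [hSeq]; exact Iff.rfl
  have hSq : S ⊆ q := fun G hG => (memS.mp hG).1
  have main : ∀ F ∈ S, ∃ H ∈ S, MedgeA D keyA varsA mode q F H := by
    intro F hF
    set W : Set V := {x | FDCl (FDsetA keyA varsA (q \ S)) (varsA F) x} with hW
    have hH : ∃ H, H ∈ S ∧ H ≠ F ∧ keyA H ⊆ W := by
      by_contra hno
      push_neg at hno
      obtain ⟨a, ha, b, hb, hab⟩ := hnt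
      obtain ⟨G, hG, hGF⟩ : ∃ G, G ∈ S ∧ G ≠ F := by
        rcases eq_or_ne a F with rfl | h
        · exact ⟨b, hb, fun h' => hab h'.symm⟩
        · exact ⟨a, ha, h⟩
      have hFG : Relation.ReflTransGen (attacks D keyA varsA mode q) F G :=
        ((memS.mp hF).2.2).trans (memS.mp hG).2.1
      obtain ⟨c, hFc, hcG⟩ : ∃ c, attacks D keyA varsA mode q F c ∧
          Relation.ReflTransGen (attacks D keyA varsA mode q) c G := by
        rcases hFG.cases_head with h | h
        · exact absurd h.symm hGF
        · exact h
      have hcS : c ∈ S := memS.mpr ⟨hFc.2.1, (memS.mp hF).2.1.tail hFc,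
        hcG.trans (memS.mp hG).2.2⟩
      have hcF : Relation.ReflTransGen (attacks D keyA varsA mode q) c F :=
        (memS.mp hcS).2.2.trans (memS.mp hF).2.1
      have hweak := weak_edge hnsc hFc hcF
      have hclc : ∀ y ∈ keyA c, FDCl (FDsetA keyA varsA q) (keyA F) y :=
        cl_of_fdImplies hweak
      have hsub : ∀ y, FDCl (FDsetA keyA varsA q) (keyA F) y → y ∈ W := by
        intro y hy
        induction hy with
        | base hx => exact FDCl.base (hkey F hx)
        | step hσ hk hwσ ih =>
          obtain ⟨E, hEq, hEeq⟩ := hσ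
          subst hEeq
          by_cases hES : E ∈ S
          · rcases eq_or_ne E F with rfl | hEF
            · exact FDCl.base hwσ
            · exact absurd (fun u hu => ih u hu) (hno E hES hEF)
          · exact FDCl.step (Set.mem_image_of_mem _ ⟨hEq, hES⟩) ih hwσ
      exact hno c hcS (Ne.symm hFc.2.2.1) (fun u hu => hsub u (hclc u hu))
    obtain ⟨H, hHS, hHF, hHW⟩ := hH
    obtain ⟨L, hLmem, hLpre, hLcov⟩ :=
      exists_seq_list keyA varsA (q \ S) (hq.diff (t := S)) (varsA F)
    have perW : ∀ w ∈ keyA H,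
        FDImplies D (FDsetA keyA varsA (catomsA mode q)) (varsA F) {w} := by
      intro w hw
      by_cases hwF : w ∈ varsA F
      · intro Vs _ _ θ hθ μ hμ hag y hy
        rw [Set.mem_singleton_iff] at hy
        rw [hy]
        exact hag w hwF
      · apply hsat
        constructor
        · refine ⟨L, ⟨fun E hE => (hLmem E hE).1, hLpre, ?_⟩, ?_⟩
          · rcases hLcov w (hHW hw) with h | ⟨E, hE, hwE⟩
            · exact absurd h hwF
            · exact ⟨E, hE, hwE⟩
          · intro E hE u hu hatt
            have hES : E ∉ S := (hLmem E hE).2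
            simp only [Set.mem_union, Set.mem_singleton_iff] at hu
            rcases hu with hu | rfl
            · exact hES (hinit E F (attacksVar_attacks hatt (hSq hF) hu
                (fun h => hES (h ▸ hF))) hF)
            · exact hES (hinit E H (attacksVar_attacks hatt (hSq hHS) (hkey H hw)
                (fun h => hES (h ▸ hHS))) hHS)
        · exact ⟨F, hSq hF, subset_rfl⟩
    refine ⟨H, hHS, hSq hF, hSq hHS, Ne.symm hHF, ?_⟩
    intro Vs hfin hsat' θ hθ μ hμ hag y hy
    exact perW y hy Vs hfin hsat' θ hθ μ hμ hag y rfl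
  refine ⟨main, ?_⟩
  choose g hg using fun F (hF : F ∈ S) => main F hF
  set g' : A → A := fun F => if h : F ∈ S then g F h else F with hg'
  have hstep : ∀ F (hF : F ∈ S), g' F ∈ S ∧ MedgeA D keyA varsA mode q F (g' F) := by
    intro F hF
    have := hg F hF
    simp only [hg', dif_pos hF]
    exact ⟨this.1, this.2⟩
  obtain ⟨a, ha, -, -, -⟩ := hnt
  set f : ℕ → A := fun n => g'^[n] a with hf
  have hfS : ∀ n, f n ∈ S := by
    intro n
    induction n with
    | zero => exact ha
    | succ n ih =>
      have : f (n + 1) = g' (f n) := Function.iterate_succ_apply' g' n a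
      rw [this]
      exact (hstep _ ih).1
  have hfM : ∀ n, MedgeA D keyA varsA mode q (f n) (f (n + 1)) := by
    intro n
    have h1 : f (n + 1) = g' (f n) := Function.iterate_succ_apply' g' n a
    rw [h1]
    exact (hstep _ (hfS n)).2
  have hSfin : S.Finite := hq.subset hSq
  have : Finite ↥S := hSfin.to_subtype
  obtain ⟨i, j, hij, hfij⟩ :=
    Finite.exists_ne_map_eq_of_infinite (fun n : ℕ => (⟨f n, hfS n⟩ : ↥S))
  have hfij' : f i = f j := congrArg Subtype.val hfij
  rcases Nat.lt_or_ge i j with hlt | hge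
  · refine ⟨j - i, fun k => f (i + k), by omega, ?_, ?_⟩
    · show f (i + (j - i)) = f (i + 0)
      rw [Nat.add_sub_cancel' (Nat.le_of_lt hlt), Nat.add_zero]
      exact hfij'.symm
    · intro k _
      exact ⟨hfS _, hfM _⟩
  · have hlt : j < i := by omega
    refine ⟨i - j, fun k => f (j + k), by omega, ?_, ?_⟩
    · show f (j + (i - j)) = f (j + 0)
      rw [Nat.add_sub_cancel' (Nat.le_of_lt hlt), Nat.add_zero]
      exact hfij'
    · intro k _
      exact ⟨hfS _, hfM _⟩
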